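/- arXiv:2602.05315 — 2 statements merged into one kernel-verified Lean document; each statement's English description precedes it below -/
import Mathlib

section
/- In any finite binary tree, if N is a set of nodes, then the LCA-closure of N, defined as N together with all pairwise lowest common ancestors of elements of N, has cardinality at most 2·|N| − 1 (when N is nonempty). -/
/-- In a finite tree (modelled as a finite meet-semilattice under the
ancestor order, in which the set of ancestors of any node is totally
ordered, so that `⊓` is the lowest common ancestor), the LCA-closure
`N ∪ {lca a b : a, b ∈ N}` of a nonempty node set `N` has cardinality at
most `2·|N| − 1`. -/
theorem lca_closure_card_le {α : Type*} [SemilatticeInf α] [Fintype α] [DecidableEq α]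
    (htree : ∀ a b c : α, a ≤ c → b ≤ c → (a ≤ b ∨ b ≤ a))
    (N : Finset α) (hN : N.Nonempty) :
    (N ∪ (N ×ˢ N).image (fun p => p.1 ⊓ p.2)).card ≤ 2 * N.card - 1 := by
  classical
  induction hN using Finset.Nonempty.cons_induction with
  | singleton a => simp
  | cons x s hx hs IH =>
    obtain ⟨m, hm_mem, hm_max⟩ := (s.image (fun n => x ⊓ n)).exists_maximal (hs.image _)
    obtain ⟨n₀, hn₀, rfl⟩ := Finset.mem_image.1 hm_mem
    have hmax : ∀ n ∈ s, x ⊓ n ≤ x ⊓ n₀ := by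
      intro n hn
      rcases htree (x ⊓ n) (x ⊓ n₀) x inf_le_left inf_le_left with h | h
      · exact h
      · rcases h.lt_or_eq with h' | h'
        · exact absurd h' (not_lt_of_ge (hm_max (Finset.mem_image_of_mem _ hn) h'.le))
        · exact h'.ge
    have key : ∀ n ∈ s, x ⊓ n = x ⊓ n₀ ∨ ∃ a ∈ s, ∃ b ∈ s, x ⊓ n = a ⊓ b := by
      intro n hn
      rcases htree (x ⊓ n) (n₀ ⊓ n) n inf_le_right inf_le_right with h | h
      · rcases htree (x ⊓ n₀) (n₀ ⊓ n) n₀ inf_le_right inf_le_left with h2 | h2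
        · left
          exact le_antisymm (hmax n hn)
            (le_inf inf_le_left (h2.trans inf_le_right))
        · right
          exact ⟨n₀, hn₀, n, hn,
            le_antisymm h (le_inf (h2.trans inf_le_left) inf_le_right)⟩
      · right
        exact ⟨n₀, hn₀, n, hn,
          le_antisymm (le_inf ((hmax n hn).trans inf_le_right) inf_le_right) h⟩
    have hsub : (s.cons x hx ∪ ((s.cons x hx) ×ˢ (s.cons x hx)).image (fun p => p.1 ⊓ p.2))
        ⊆ insert x (insert (x ⊓ n₀)
            (s ∪ (s ×ˢ s).image (fun p => p.1 ⊓ p.2))) := by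
      intro y hy
      simp only [Finset.mem_union, Finset.mem_cons, Finset.mem_image, Finset.mem_product,
        Finset.mem_insert, Prod.exists] at hy ⊢
      rcases hy with (rfl | hy) | ⟨a, b, ⟨ha, hb⟩, rfl⟩
      · exact Or.inl rfl
      · exact Or.inr (Or.inr (Or.inl hy))
      · rcases ha with rfl | ha <;> rcases hb with rfl | hb
        · exact Or.inl (inf_idem _)
        · rcases key b hb with h | ⟨a', ha', b', hb', h⟩
          · exact Or.inr (Or.inl h)
          · exact Or.inr (Or.inr (Or.inr ⟨a', b', ⟨ha', hb'⟩, h.symm⟩))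
        · rcases key a ha with h | ⟨a', ha', b', hb', h⟩
          · exact Or.inr (Or.inl ((inf_comm a b) ▸ h))
          · exact Or.inr (Or.inr (Or.inr ⟨a', b', ⟨ha', hb'⟩, ((inf_comm a b) ▸ h).symm⟩))
        · exact Or.inr (Or.inr (Or.inr ⟨a, b, ⟨ha, hb⟩, rfl⟩))
    have h1 : 1 ≤ s.card := hs.card_pos
    have h2 := Finset.card_le_card hsub
    have h3 := (Finset.card_insert_le x (insert (x ⊓ n₀)
      (s ∪ (s ×ˢ s).image (fun p => p.1 ⊓ p.2)))).trans
      (Nat.succ_le_succ (Finset.card_insert_le _ _))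
    rw [Finset.card_cons]
    omega
end

section
/- Define a 1-dimensional grammar with nonterminals X_1, ..., X_k where X_1 has rules X_1 → (−1) X_1 (+2) and X_1 → 0, and for i ≥ 2, X_i has rules X_i → (−1) X_i X_{i−1} and X_i → (+1). Then starting from counter value n, the maximal value derivable by X_i (as the total displacement added, keeping the counter nonnegative throughout a left-to-right reading) is F_i(n), where F_1(n) = 2n and F_i(n) = F_{i−1}^[n](1). In particular the reachability set of this k-indexed grammar from input n has values as large as F_k(n) (Ackermannian in k). -/
/-- The fast-growing hierarchy: `F 1 n = 2n`, and for `d > 1`,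
`F d n = (F (d-1))^[n] 1`. -/
def fastGrowing : ℕ → ℕ → ℕ
  | 0 => fun n => n
  | 1 => fun n => 2 * n
  | (d + 2) => fun n => (fastGrowing (d + 1))^[n] 1

/-- The value function computed by the nonterminals of the grammar
`X_1 → (−1) X_1 (+2)`, `X_1 → 0`, and `X_i → (−1) X_i X_{i−1}`,
`X_i → (+1)` for `i ≥ 2`, under the optimal derivation strategy keeping
the counter nonnegative:

* `X_1` from counter `n` applies its cycle `m ≤ n` times, reaching `n + m`
  (optimally `2n`);
* `X_i` from counter `n` applies its cycle `m ≤ n` times, paying `m` tokens,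
  producing `+1` and then `m` copies of `X_{i−1}`, so the optimal value is
  the maximum over `m ≤ n` of `(gVal (i−1))^[m] (n − m + 1)`. -/
def gVal : ℕ → ℕ → ℕ
  | 0 => fun n => n
  | 1 => fun n => Finset.sup (Finset.range (n + 1)) (fun m => n + m)
  | (i + 2) => fun n =>
      Finset.sup (Finset.range (n + 1)) (fun m => (gVal (i + 1))^[m] (n - m + 1))

lemma fastGrowing_facts : ∀ d : ℕ, Monotone (fastGrowing (d + 1)) ∧
    ∀ x : ℕ, 1 ≤ x → x + 1 ≤ fastGrowing (d + 1) x := by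
  intro d
  induction d with
  | zero =>
    constructor
    · intro a b h; simp only [fastGrowing]; omega
    · intro x hx; simp only [fastGrowing]; omega
  | succ d ih =>
    obtain ⟨hmono, hge⟩ := ih
    have hiter : ∀ j : ℕ, j + 1 ≤ (fastGrowing (d + 1))^[j] 1 := by
      intro j
      induction j with
      | zero => simp
      | succ j ihj =>
        rw [Function.iterate_succ_apply']
        have := hge ((fastGrowing (d + 1))^[j] 1) (by omega)
        omega
    constructor
    · intro a b hab
      show (fastGrowing (d + 1))^[a] 1 ≤ (fastGrowing (d + 1))^[b] 1
      have : b = a + (b - a) := by omega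
      rw [this, Function.iterate_add_apply]
      exact (hmono.iterate a) (by have := hiter (b - a); omega)
    · intro x hx
      show x + 1 ≤ (fastGrowing (d + 1))^[x] 1
      exact hiter x

/-- The maximal value derivable by nonterminal `X_i` from counter value `n`
equals the fast-growing function `F_i(n)`; in particular the reachability set
of this `k`-indexed one-dimensional grammar from input `n` contains values as
large as `F_k(n)`. -/
theorem grammar_value_eq_fastGrowing :
    ∀ i : ℕ, 1 ≤ i → ∀ n : ℕ, gVal i n = fastGrowing i n := by
  intro i
  induction i with
  | zero => omega
  | succ i ih =>
    intro _ n
    match i with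
    | 0 =>
      show Finset.sup (Finset.range (n + 1)) (fun m => n + m) = 2 * n
      apply le_antisymm
      · apply Finset.sup_le
        intro m hm
        simp only [Finset.mem_range] at hm
        omega
      · have : n ∈ Finset.range (n + 1) := by simp
        have h2 := Finset.le_sup (f := fun m => n + m) this
        change n + n ≤ _ at h2
        omega
    | i + 1 =>
      have hG : gVal (i + 1) = fastGrowing (i + 1) := by
        funext x; exact ih (by omega) x
      obtain ⟨hmono, hge⟩ := fastGrowing_facts i
      have hiter : ∀ j : ℕ, j + 1 ≤ (fastGrowing (i + 1))^[j] 1 := by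
        intro j
        induction j with
        | zero => simp
        | succ j ihj =>
          rw [Function.iterate_succ_apply']
          have := hge ((fastGrowing (i + 1))^[j] 1) (by omega)
          omega
      show Finset.sup (Finset.range (n + 1)) (fun m => (gVal (i + 1))^[m] (n - m + 1))
          = (fastGrowing (i + 1))^[n] 1
      rw [hG]
      apply le_antisymm
      · apply Finset.sup_le
        intro m hm
        simp only [Finset.mem_range] at hm
        have h1 : n - m + 1 ≤ (fastGrowing (i + 1))^[n - m] 1 := by
          have := hiter (n - m); omega
        calc (fastGrowing (i + 1))^[m] (n - m + 1)
            ≤ (fastGrowing (i + 1))^[m] ((fastGrowing (i + 1))^[n - m] 1) :=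
              (hmono.iterate m) h1
          _ = (fastGrowing (i + 1))^[n] 1 := by
              rw [← Function.iterate_add_apply]
              congr 1; omega
      · have hn : n ∈ Finset.range (n + 1) := by simp
        have := Finset.le_sup (f := fun m => (fastGrowing (i + 1))^[m] (n - m + 1)) hn
        simpa using this
end
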